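/- Fix finite types E (cells) and K (commodities), a horizon N ∈ ℕ, a step size h > 0, demand functions d i k : ℝ → ℝ concave on [0,∞), supply functions s i : ℝ → ℝ concave on [0,∞), positive weights w i k > 0, exogenous inflows λ : Fin N → E → K → ℝ, turning ratios R : Fin N → E → E → K → ℝ with R t i j k ≥ 0, and an initial condition x⁰ : E → K → ℝ. Then the feasible set of the discrete-time relaxed MC-FNC problem, namely the set of triples (x, z, f) with x : Fin (N+1) → E → K → ℝ, z : Fin N → E → K → ℝ, f : Fin N → E → E → K → ℝ satisfying: x 0 = x⁰; for all t, i, k: x (t+1) i k = x t i k + h·(λ t i k + Σ_{j ∈ E} f t j i k − z t i k); 0 ≤ x t i k; 0 ≤ z t i k ≤ d i k (x t i k); Σ_{k ∈ K} Σ_{j ∈ E} f t j i k ≤ s i (Σ_{k ∈ K} w i k · x t i k); f t i j k = R t i j k · z t i k; and f t i j k ≥ 0, is a convex set. -/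
import Mathlib


/-- The feasible set of the discrete-time relaxed MC-FNC problem is convex:
trajectories `(x, z, f)` satisfy the initial condition, the mass-conservation
update, nonnegativity, demand constraints with `d i k` concave on `[0, ∞)`,
supply constraints with `s i` concave on `[0, ∞)` and positive weights `w i k`,
and the routing equalities with nonnegative turning ratios. -/
theorem discrete_relaxed_feasible_set_convex
    (E K : Type*) [Fintype E] [Fintype K] (N : ℕ)
    (h : ℝ) (hh : 0 < h)
    (d : E → K → ℝ → ℝ)
    (hd : ∀ i k, ConcaveOn ℝ (Set.Ici (0 : ℝ)) (d i k))
    (s : E → ℝ → ℝ)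
    (hs : ∀ i, ConcaveOn ℝ (Set.Ici (0 : ℝ)) (s i))
    (w : E → K → ℝ) (hw : ∀ i k, 0 < w i k)
    (lam : Fin N → E → K → ℝ)
    (R : Fin N → E → E → K → ℝ) (hR : ∀ t i j k, 0 ≤ R t i j k)
    (x0 : E → K → ℝ) :
    Convex ℝ {p : (Fin (N + 1) → E → K → ℝ) × (Fin N → E → K → ℝ) ×
        (Fin N → E → E → K → ℝ) |
      p.1 0 = x0 ∧
      (∀ (t : Fin N) i k, p.1 t.succ i k =
        p.1 t.castSucc i k + h * (lam t i k + (∑ j, p.2.2 t j i k) - p.2.1 t i k)) ∧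
      (∀ t i k, 0 ≤ p.1 t i k) ∧
      (∀ (t : Fin N) i k, 0 ≤ p.2.1 t i k ∧ p.2.1 t i k ≤ d i k (p.1 t.castSucc i k)) ∧
      (∀ (t : Fin N) i, (∑ k, ∑ j, p.2.2 t j i k) ≤
        s i (∑ k, w i k * p.1 t.castSucc i k)) ∧
      (∀ (t : Fin N) i j k, p.2.2 t i j k = R t i j k * p.2.1 t i k) ∧
      (∀ (t : Fin N) i j k, 0 ≤ p.2.2 t i j k)} := by
  intro p hp q hq a b ha hb hab
  obtain ⟨hp0, hp1, hp2, hp3, hp4, hp5, hp6⟩ := hp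
  obtain ⟨hq0, hq1, hq2, hq3, hq4, hq5, hq6⟩ := hq
  refine ⟨?_, ?_, ?_, ?_, ?_, ?_, ?_⟩ <;>
    simp only [Set.mem_setOf_eq, Prod.fst_add, Prod.snd_add, Prod.smul_fst, Prod.smul_snd,
      Pi.add_apply, Pi.smul_apply, smul_eq_mul]
  · funext i k
    simp only [Pi.add_apply, Pi.smul_apply, smul_eq_mul, hp0, hq0]
    linear_combination x0 i k * hab
  · intro t i k
    rw [hp1 t i k, hq1 t i k]
    simp only [Finset.sum_add_distrib, ← Finset.mul_sum]
    linear_combination h * lam t i k * hab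
  · intro t i k
    exact add_nonneg (mul_nonneg ha (hp2 t i k)) (mul_nonneg hb (hq2 t i k))
  · intro t i k
    refine ⟨add_nonneg (mul_nonneg ha (hp3 t i k).1) (mul_nonneg hb (hq3 t i k).1), ?_⟩
    have := (hd i k).2 (hp2 t.castSucc i k) (hq2 t.castSucc i k) ha hb hab
    simp only [smul_eq_mul] at this
    exact le_trans (add_le_add (mul_le_mul_of_nonneg_left (hp3 t i k).2 ha)
      (mul_le_mul_of_nonneg_left (hq3 t i k).2 hb)) this
  · intro t i
    have hxp : (0:ℝ) ≤ ∑ k, w i k * p.1 t.castSucc i k :=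
      Finset.sum_nonneg fun k _ => mul_nonneg (hw i k).le (hp2 t.castSucc i k)
    have hxq : (0:ℝ) ≤ ∑ k, w i k * q.1 t.castSucc i k :=
      Finset.sum_nonneg fun k _ => mul_nonneg (hw i k).le (hq2 t.castSucc i k)
    have hsc := (hs i).2 hxp hxq ha hb hab
    simp only [smul_eq_mul] at hsc
    have harg : (∑ k, w i k * (a * p.1 t.castSucc i k + b * q.1 t.castSucc i k)) =
        a * (∑ k, w i k * p.1 t.castSucc i k) + b * (∑ k, w i k * q.1 t.castSucc i k) := by
      rw [Finset.mul_sum, Finset.mul_sum, ← Finset.sum_add_distrib]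
      exact Finset.sum_congr rfl fun k _ => by ring
    rw [harg]
    calc (∑ k, ∑ j, (a * p.2.2 t j i k + b * q.2.2 t j i k))
        = a * (∑ k, ∑ j, p.2.2 t j i k) + b * (∑ k, ∑ j, q.2.2 t j i k) := by
          simp [Finset.mul_sum, Finset.sum_add_distrib]
      _ ≤ a * s i (∑ k, w i k * p.1 t.castSucc i k) +
            b * s i (∑ k, w i k * q.1 t.castSucc i k) :=
          add_le_add (mul_le_mul_of_nonneg_left (hp4 t i) ha)
            (mul_le_mul_of_nonneg_left (hq4 t i) hb)
      _ ≤ _ := hsc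
  · intro t i j k
    rw [hp5 t i j k, hq5 t i j k]
    ring
  · intro t i j k
    exact add_nonneg (mul_nonneg ha (hp6 t i j k)) (mul_nonneg hb (hq6 t i j k))
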